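/- Let f : I → ℝ be strictly increasing and n ∈ ℕ. For all x ∈ Iⁿ, lim_{u→x⁻} A_f^{[n]}(u) = A_{f₋}^{[n]}(x) ≤ A_f^{[n]}(x) ≤ A_{f₊}^{[n]}(x) = lim_{u→x⁺} A_f^{[n]}(u), where the limits are taken coordinatewise from the left and right respectively. -/

import Mathlib

open Set Filter Topology

/-- `finv` is the generalized inverse of the strictly increasing function `f : I → ℝ`:
an increasing continuous left inverse of `f` mapping `conv (f '' I)` into `I`. -/
def IsGenInv (I : Set ℝ) (f finv : ℝ → ℝ) : Prop :=
  MonotoneOn finv (convexHull ℝ (f '' I)) ∧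
  ContinuousOn finv (convexHull ℝ (f '' I)) ∧
  Set.MapsTo finv (convexHull ℝ (f '' I)) I ∧
  ∀ x ∈ I, finv (f x) = x

/-- The `n`-variable generalized quasiarithmetic mean `A_f^{[n]}` generated by `f`,
where `finv` is the generalized inverse of `f`. -/
noncomputable def qam (finv f : ℝ → ℝ) (n : ℕ) (x : Fin n → ℝ) : ℝ :=
  finv ((∑ i, f (x i)) / n)

/-- coordinatewise one-sided limits of `A_f^{[n]}` are `A_{f₋}^{[n]}` and
`A_{f₊}^{[n]}`, and `A_{f₋}^{[n]}(x) ≤ A_f^{[n]}(x) ≤ A_{f₊}^{[n]}(x)`.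
(The generalized inverses of `f₋`, `f` and `f₊` coincide.) -/

lemma avg_mem (s : Set ℝ) (hs : Convex ℝ s) (n : ℕ) (z : Fin (n+1) → ℝ)
    (hz : ∀ i, z i ∈ s) : (∑ i, z i) / (n+1 : ℕ) ∈ s := by
  have h := hs.sum_mem (t := Finset.univ) (w := fun _ : Fin (n+1) => (1:ℝ)/(n+1))
    (fun i _ => by positivity) (by
      rw [Finset.sum_const, Finset.card_univ, Fintype.card_fin, nsmul_eq_mul]
      push_cast
      field_simp) (fun i _ => hz i)
  convert h using 1
  rw [Finset.sum_div]
  congr 1; ext i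
  rw [smul_eq_mul]; push_cast; ring

lemma left_mem_le (I : Set ℝ) (hIo : IsOpen I) (f fm : ℝ → ℝ)
    (hf : StrictMonoOn f I) (x : ℝ) (hx : x ∈ I)
    (h : Tendsto f (𝓝[<] x) (𝓝 (fm x))) :
    fm x ∈ convexHull ℝ (f '' I) ∧ fm x ≤ f x := by
  obtain ⟨l, u, hlu, hsub⟩ := mem_nhds_iff_exists_Ioo_subset.mp (hIo.mem_nhds hx)
  have hlx := hlu.1; have hxu := hlu.2
  set y := (l + x) / 2 with hy
  have hyx : y < x := by rw [hy]; linarith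
  have hyI : y ∈ I := hsub (mem_Ioo.mpr ⟨by rw [hy]; linarith, by linarith⟩)
  have hev : ∀ᶠ t in 𝓝[<] x, t ∈ I ∩ Ioo y x := by
    filter_upwards [eventually_mem_nhdsWithin,
      eventually_nhdsWithin_of_eventually_nhds (hIo.eventually_mem hx),
      eventually_nhdsWithin_of_eventually_nhds (eventually_gt_nhds hyx)] with t h1 h2 h3
    exact ⟨h2, h3, h1⟩
  have h1 : fm x ≤ f x := le_of_tendsto h (by
    filter_upwards [hev] with t ht
    exact (hf ht.1 hx ht.2.2).le)
  have h2 : f y ≤ fm x := ge_of_tendsto h (by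
    filter_upwards [hev] with t ht
    exact (hf hyI ht.1 ht.2.1).le)
  refine ⟨?_, h1⟩
  exact (convex_convexHull ℝ _).ordConnected.out
    (subset_convexHull ℝ (f '' I) (mem_image_of_mem f hyI))
    (subset_convexHull ℝ (f '' I) (mem_image_of_mem f hx)) ⟨h2, h1⟩

lemma right_mem_le (I : Set ℝ) (hIo : IsOpen I) (f fp : ℝ → ℝ)
    (hf : StrictMonoOn f I) (x : ℝ) (hx : x ∈ I)
    (h : Tendsto f (𝓝[>] x) (𝓝 (fp x))) :
    fp x ∈ convexHull ℝ (f '' I) ∧ f x ≤ fp x := by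
  obtain ⟨l, u, hlu, hsub⟩ := mem_nhds_iff_exists_Ioo_subset.mp (hIo.mem_nhds hx)
  have hlx := hlu.1; have hxu := hlu.2
  set y := (x + u) / 2 with hy
  have hyx : x < y := by rw [hy]; linarith
  have hyI : y ∈ I := hsub (mem_Ioo.mpr ⟨by linarith, by rw [hy]; linarith⟩)
  have hev : ∀ᶠ t in 𝓝[>] x, t ∈ I ∩ Ioo x y := by
    filter_upwards [eventually_mem_nhdsWithin,
      eventually_nhdsWithin_of_eventually_nhds (hIo.eventually_mem hx),
      eventually_nhdsWithin_of_eventually_nhds (eventually_lt_nhds hyx)] with t h1 h2 h3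
    exact ⟨h2, h1, h3⟩
  have h1 : f x ≤ fp x := ge_of_tendsto h (by
    filter_upwards [hev] with t ht
    exact (hf hx ht.1 ht.2.1).le)
  have h2 : fp x ≤ f y := le_of_tendsto h (by
    filter_upwards [hev] with t ht
    exact (hf ht.1 hyI ht.2.2).le)
  refine ⟨?_, h1⟩
  exact (convex_convexHull ℝ _).ordConnected.out
    (subset_convexHull ℝ (f '' I) (mem_image_of_mem f hx))
    (subset_convexHull ℝ (f '' I) (mem_image_of_mem f hyI)) ⟨h1, h2⟩

theorem stmt11 (I : Set ℝ) (hIo : IsOpen I) (hIc : I.OrdConnected) (hne : I.Nonempty)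
    (f fm fp finv : ℝ → ℝ) (hf : StrictMonoOn f I)
    (hfm : ∀ x ∈ I, Tendsto f (𝓝[<] x) (𝓝 (fm x)))
    (hfp : ∀ x ∈ I, Tendsto f (𝓝[>] x) (𝓝 (fp x)))
    (hinv : IsGenInv I f finv)
    (n : ℕ) (x : Fin (n + 1) → ℝ) (hx : ∀ i, x i ∈ I) :
    Tendsto (qam finv f (n + 1)) (𝓝[Set.univ.pi fun i => Iio (x i)] x)
      (𝓝 (qam finv fm (n + 1) x)) ∧
    qam finv fm (n + 1) x ≤ qam finv f (n + 1) x ∧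
    qam finv f (n + 1) x ≤ qam finv fp (n + 1) x ∧
    Tendsto (qam finv f (n + 1)) (𝓝[Set.univ.pi fun i => Ioi (x i)] x)
      (𝓝 (qam finv fp (n + 1) x)) := by
  set C := convexHull ℝ (f '' I) with hCdef
  have hC : Convex ℝ C := convex_convexHull ℝ _
  have hmL : ∀ i, fm (x i) ∈ C ∧ fm (x i) ≤ f (x i) :=
    fun i => left_mem_le I hIo f fm hf (x i) (hx i) (hfm _ (hx i))
  have hmR : ∀ i, fp (x i) ∈ C ∧ f (x i) ≤ fp (x i) :=
    fun i => right_mem_le I hIo f fp hf (x i) (hx i) (hfp _ (hx i))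
  have avgf_mem : (∑ i, f (x i)) / ((n+1 : ℕ) : ℝ) ∈ C :=
    avg_mem _ hC n _ (fun i => subset_convexHull ℝ _ (mem_image_of_mem f (hx i)))
  have avgm_mem : (∑ i, fm (x i)) / ((n+1 : ℕ) : ℝ) ∈ C :=
    avg_mem _ hC n _ (fun i => (hmL i).1)
  have avgp_mem : (∑ i, fp (x i)) / ((n+1 : ℕ) : ℝ) ∈ C :=
    avg_mem _ hC n _ (fun i => (hmR i).1)
  have havgmf : (∑ i, fm (x i)) / ((n+1 : ℕ) : ℝ) ≤ (∑ i, f (x i)) / ((n+1 : ℕ) : ℝ) := by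
    gcongr with i
    exact (hmL i).2
  have havgfp : (∑ i, f (x i)) / ((n+1 : ℕ) : ℝ) ≤ (∑ i, fp (x i)) / ((n+1 : ℕ) : ℝ) := by
    gcongr with i
    exact (hmR i).2
  have hcoordL : ∀ i, Tendsto (fun u : Fin (n+1) → ℝ => u i)
      (𝓝[Set.univ.pi fun i => Iio (x i)] x) (𝓝[<] (x i)) := fun i =>
    tendsto_nhdsWithin_of_tendsto_nhds_of_eventually_within _
      (((continuous_apply i).tendsto x).mono_left nhdsWithin_le_nhds)
      (eventually_mem_nhdsWithin.mono fun u hu => hu i (mem_univ i))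
  have hcoordR : ∀ i, Tendsto (fun u : Fin (n+1) → ℝ => u i)
      (𝓝[Set.univ.pi fun i => Ioi (x i)] x) (𝓝[>] (x i)) := fun i =>
    tendsto_nhdsWithin_of_tendsto_nhds_of_eventually_within _
      (((continuous_apply i).tendsto x).mono_left nhdsWithin_le_nhds)
      (eventually_mem_nhdsWithin.mono fun u hu => hu i (mem_univ i))
  have havgL : Tendsto (fun u : Fin (n+1) → ℝ => (∑ i, f (u i)) / ((n+1 : ℕ) : ℝ))
      (𝓝[Set.univ.pi fun i => Iio (x i)] x)
      (𝓝[C] ((∑ i, fm (x i)) / ((n+1 : ℕ) : ℝ))) := by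
    apply tendsto_nhdsWithin_of_tendsto_nhds_of_eventually_within
    · exact (tendsto_finset_sum _ (fun i _ => (hfm _ (hx i)).comp (hcoordL i))).div_const _
    · have hall : ∀ᶠ u in 𝓝[Set.univ.pi fun i => Iio (x i)] x, ∀ i, u i ∈ I := by
        rw [eventually_all]
        intro i
        exact (hcoordL i).eventually
          (eventually_nhdsWithin_of_eventually_nhds (hIo.eventually_mem (hx i)))
      filter_upwards [hall] with u hu
      exact avg_mem _ hC n _ (fun i => subset_convexHull ℝ _ (mem_image_of_mem f (hu i)))
  have havgR : Tendsto (fun u : Fin (n+1) → ℝ => (∑ i, f (u i)) / ((n+1 : ℕ) : ℝ))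
      (𝓝[Set.univ.pi fun i => Ioi (x i)] x)
      (𝓝[C] ((∑ i, fp (x i)) / ((n+1 : ℕ) : ℝ))) := by
    apply tendsto_nhdsWithin_of_tendsto_nhds_of_eventually_within
    · exact (tendsto_finset_sum _ (fun i _ => (hfp _ (hx i)).comp (hcoordR i))).div_const _
    · have hall : ∀ᶠ u in 𝓝[Set.univ.pi fun i => Ioi (x i)] x, ∀ i, u i ∈ I := by
        rw [eventually_all]
        intro i
        exact (hcoordR i).eventually
          (eventually_nhdsWithin_of_eventually_nhds (hIo.eventually_mem (hx i)))
      filter_upwards [hall] with u hu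
      exact avg_mem _ hC n _ (fun i => subset_convexHull ℝ _ (mem_image_of_mem f (hu i)))
  refine ⟨?_, ?_, ?_, ?_⟩
  · show Tendsto (fun u : Fin (n+1) → ℝ => finv ((∑ i, f (u i)) / ((n+1 : ℕ) : ℝ))) _
        (𝓝 (finv ((∑ i, fm (x i)) / ((n+1 : ℕ) : ℝ))))
    exact (hinv.2.1 _ avgm_mem).tendsto.comp havgL
  · exact hinv.1 avgm_mem avgf_mem havgmf
  · exact hinv.1 avgf_mem avgp_mem havgfp
  · show Tendsto (fun u : Fin (n+1) → ℝ => finv ((∑ i, f (u i)) / ((n+1 : ℕ) : ℝ))) _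
        (𝓝 (finv ((∑ i, fp (x i)) / ((n+1 : ℕ) : ℝ))))
    exact (hinv.2.1 _ avgp_mem).tendsto.comp havgR
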